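/- arXiv:2510.22586 — 4 statements merged into one kernel-verified Lean document; each statement's English description precedes it below -/
import Mathlib

section
/- Let h1,…,hT be convex differentiable functions on a bounded convex set D ⊂ ℝ^d with diameter R_D. The AdaGrad iterates u_{t+1} = Π_D(u_t − γ_t ∇h_t(u_t)) with γ_t = R_D (2 Σ_{s=1}^t ‖∇h_s(u_s)‖²)^{−1/2} satisfy, for every u* ∈ D and any u_1 ∈ D, the regret bound Σ_{t=1}^T (h_t(u_t) − h_t(u*)) ≤ R_D √(2 Σ_{t=1}^T ‖∇h_t(u_t)‖²). -/
open Finset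
open scoped RealInnerProductSpace Topology

section AuxLemmas

variable {E : Type*} [NormedAddCommGroup E] [InnerProductSpace ℝ E] [CompleteSpace E]

/-- Gradient inequality for convex functions. -/
theorem grad_ineq' {D : Set E} {f : E → ℝ} {g x y : E}
    (hf : ConvexOn ℝ D f) (hx : x ∈ D) (hy : y ∈ D) (hg : HasGradientAt f g x) :
    ⟪g, y - x⟫ ≤ f y - f x := by
  set v := y - x with hv
  have hpath : HasDerivAt (fun s : ℝ => x + s • v) v 0 := by
    simpa using ((hasDerivAt_id (0 : ℝ)).smul_const v).const_add x
  have hDer : HasDerivAt (fun s : ℝ => f (x + s • v)) ⟪g, v⟫ 0 := by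
    have h0 : HasFDerivAt f (InnerProductSpace.toDual ℝ E g)
        ((fun s : ℝ => x + s • v) 0) := by simpa using hg.hasFDerivAt
    have := h0.comp_hasDerivAt 0 hpath
    simp only [InnerProductSpace.toDual_apply_apply] at this
    exact this
  have hslope : Filter.Tendsto (slope (fun s : ℝ => f (x + s • v)) 0) (𝓝[>] 0)
      (𝓝 ⟪g, v⟫) :=
    (hasDerivAt_iff_tendsto_slope.mp hDer).mono_left
      (nhdsWithin_mono _ fun s hs => ne_of_gt hs)
  refine le_of_tendsto hslope ?_
  filter_upwards [Ioc_mem_nhdsGT (zero_lt_one : (0:ℝ) < 1)] with s hs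
  have hcomb : f (x + s • v) ≤ (1 - s) * f x + s * f y := by
    have := hf.2 hx hy (by linarith [hs.2] : (0:ℝ) ≤ 1 - s) hs.1.le (by ring)
    have heq : (1 - s) • x + s • y = x + s • v := by
      rw [hv]; module
    rwa [heq] at this
  have h0v : (fun s : ℝ => f (x + s • v)) 0 = f x := by simp
  rw [slope_def_field]
  simp only [h0v, sub_zero]
  rw [div_le_iff₀ hs.1]
  nlinarith [hcomb]

/-- Squared-distance contraction for metric projection onto a convex set. -/
theorem proj_sq' {D : Set E} (hDconv : Convex ℝ D) {p v u : E} (hp : p ∈ D)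
    (hmin : ∀ w ∈ D, ‖p - v‖ ≤ ‖w - v‖) (hu : u ∈ D) :
    ‖p - u‖ ^ 2 ≤ ‖v - u‖ ^ 2 := by
  haveI : Nonempty D := ⟨⟨p, hp⟩⟩
  have hinner : ⟪v - p, u - p⟫ ≤ 0 := by
    have heq : ‖v - p‖ = ⨅ w : D, ‖v - w‖ := by
      apply le_antisymm
      · refine le_ciInf fun w => ?_
        have := hmin w w.2
        rwa [norm_sub_rev p v, norm_sub_rev (w : E) v] at this
      · exact ciInf_le ⟨0, by rintro _ ⟨w, rfl⟩; exact norm_nonneg _⟩ (⟨p, hp⟩ : D)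
    exact (norm_eq_iInf_iff_real_inner_le_zero hDconv hp).mp heq u hu
  have key : ‖v - u‖ ^ 2 = ‖v - p‖ ^ 2 - 2 * ⟪v - p, u - p⟫ + ‖u - p‖ ^ 2 := by
    have hvu : v - u = (v - p) - (u - p) := by abel
    rw [hvu, norm_sub_sq_real]
  rw [norm_sub_rev p u]
  nlinarith [sq_nonneg ‖v - p‖]

/-- Step inequality for the sqrt telescoping sum. -/
theorem sqrt_step' {a S' : ℝ} (ha : 0 ≤ a) (hS' : 0 ≤ S') :
    a / Real.sqrt (2 * (S' + a)) ≤ Real.sqrt (2 * (S' + a)) - Real.sqrt (2 * S') := by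
  set x := Real.sqrt (2 * (S' + a)) with hx
  set y := Real.sqrt (2 * S') with hy
  have hx2 : x ^ 2 = 2 * (S' + a) := Real.sq_sqrt (by linarith)
  have hy2 : y ^ 2 = 2 * S' := Real.sq_sqrt (by linarith)
  have hxnn : 0 ≤ x := Real.sqrt_nonneg _
  have hynn : 0 ≤ y := Real.sqrt_nonneg _
  rcases eq_or_lt_of_le hxnn with h0 | hxpos
  · have ha0 : a = 0 := by nlinarith
    have hS0 : S' = 0 := by nlinarith
    simp [hx, hy, ha0, hS0]
  · rw [div_le_iff₀ hxpos]
    nlinarith [sq_nonneg (x - y)]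

end AuxLemmas

set_option maxHeartbeats 1000000 in
/-- AdaGrad regret bound: for convex differentiable `h₁,…,h_T` on a compact convex set `D`
with diameter `R_D`, the projected AdaGrad iterates with stepsize
`γ_t = R_D (2 Σ_{s≤t} ‖∇h_s(u_s)‖²)^{−1/2}` satisfy
`Σ_t (h_t(u_t) − h_t(u*)) ≤ R_D √(2 Σ_t ‖∇h_t(u_t)‖²)` for every `u* ∈ D`. -/
theorem stmt8 {d : ℕ} (D : Set (EuclideanSpace ℝ (Fin d)))
    (hDconv : Convex ℝ D) (hDne : D.Nonempty) (hDcomp : IsCompact D)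
    (T : ℕ) (h : ℕ → EuclideanSpace ℝ (Fin d) → ℝ)
    (gradh : ℕ → EuclideanSpace ℝ (Fin d) → EuclideanSpace ℝ (Fin d))
    (U : Set (EuclideanSpace ℝ (Fin d))) (hU : IsOpen U) (hDU : D ⊆ U)
    (hconv : ∀ t, ConvexOn ℝ D (h t))
    (hgrad : ∀ t, ∀ x ∈ U, HasGradientAt (h t) (gradh t x) x)
    (proj : EuclideanSpace ℝ (Fin d) → EuclideanSpace ℝ (Fin d))
    (hproj : ∀ v, proj v ∈ D ∧ ∀ u ∈ D, ‖proj v - v‖ ≤ ‖u - v‖)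
    (u : ℕ → EuclideanSpace ℝ (Fin d)) (hu0 : u 0 ∈ D)
    (hupdate : ∀ t, u (t + 1) =
      proj (u t - (Metric.diam D / Real.sqrt (2 * ∑ s ∈ range (t + 1), ‖gradh s (u s)‖ ^ 2)) •
        gradh t (u t)))
    (ustar : EuclideanSpace ℝ (Fin d)) (hstar : ustar ∈ D) :
    ∑ t ∈ range T, (h t (u t) - h t ustar) ≤
      Metric.diam D * Real.sqrt (2 * ∑ t ∈ range T, ‖gradh t (u t)‖ ^ 2) := by
  classical
  have hRnn : 0 ≤ Metric.diam D := Metric.diam_nonneg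
  set R := Metric.diam D with hRdef
  set S : ℕ → ℝ := fun n => ∑ t ∈ range n, ‖gradh t (u t)‖ ^ 2 with hSdef
  have hSnn : ∀ n, 0 ≤ S n := fun n => Finset.sum_nonneg fun t _ => sq_nonneg _
  have hSsucc : ∀ n, S (n + 1) = S n + ‖gradh n (u n)‖ ^ 2 := fun n =>
    Finset.sum_range_succ _ n
  have hmem : ∀ t, u t ∈ D := by
    intro t; induction t with
    | zero => exact hu0
    | succ t ih => rw [hupdate t]; exact (hproj _).1
  show ∑ t ∈ range T, (h t (u t) - h t ustar) ≤ R * Real.sqrt (2 * S T)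
  rcases eq_or_lt_of_le hRnn with hR0 | hRpos
  · have huu : ∀ t, u t = ustar := by
      intro t
      have hd := Metric.dist_le_diam_of_mem hDcomp.isBounded (hmem t) hstar
      rw [← hRdef, ← hR0] at hd
      exact dist_le_zero.mp hd
    have hzero : ∑ t ∈ range T, (h t (u t) - h t ustar) = 0 :=
      Finset.sum_eq_zero fun t _ => by rw [huu t, sub_self]
    rw [hzero, ← hR0, zero_mul]
  · have hRne : R ≠ 0 := ne_of_gt hRpos
    set b : ℕ → ℝ := fun t => ‖u t - ustar‖ ^ 2 with hbdef
    set A : ℕ → ℝ := fun n => Real.sqrt (2 * S n) / (2 * R) with hAdef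
    have hbR : ∀ t, b t ≤ R ^ 2 := by
      intro t
      have hd := Metric.dist_le_diam_of_mem hDcomp.isBounded (hmem t) hstar
      rw [← hRdef] at hd
      have hnorm : ‖u t - ustar‖ ≤ R := by rwa [← dist_eq_norm]
      exact pow_le_pow_left₀ (norm_nonneg _) hnorm 2
    have hbnn : ∀ t, 0 ≤ b t := fun t => sq_nonneg _
    have hAmono : ∀ n, A n ≤ A (n + 1) := by
      intro n
      have hS : S n ≤ S (n + 1) := by
        rw [hSsucc]; nlinarith [sq_nonneg ‖gradh n (u n)‖]
      simp only [hAdef]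
      gcongr
    have hAnn : ∀ n, 0 ≤ A n := fun n =>
      div_nonneg (Real.sqrt_nonneg _) (by linarith)
    have hA0 : A 0 = 0 := by simp [hAdef, hSdef]
    have hgi : ∀ t, h t (u t) - h t ustar ≤ ⟪gradh t (u t), u t - ustar⟫ := by
      intro t
      have hgl := grad_ineq' (hconv t) (hmem t) hstar (hgrad t (u t) (hDU (hmem t)))
      rw [show ustar - u t = -(u t - ustar) by abel, inner_neg_right] at hgl
      linarith
    have hstep : ∀ t, ⟪gradh t (u t), u t - ustar⟫ ≤
        A (t + 1) * (b t - b (t + 1)) +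
          (R / 2) * (‖gradh t (u t)‖ ^ 2 / Real.sqrt (2 * S (t + 1))) := by
      intro t
      rcases eq_or_lt_of_le (hSnn (t + 1)) with hS0 | hSpos
      · have hgz : gradh t (u t) = 0 := by
          have h1 : ‖gradh t (u t)‖ ^ 2 ≤ S (t + 1) := by
            rw [hSsucc]; linarith [hSnn t]
          have h2 : ‖gradh t (u t)‖ ^ 2 = 0 :=
            le_antisymm (by rw [← hS0] at h1; exact h1) (sq_nonneg _)
          have := pow_eq_zero_iff (n := 2) (by norm_num) |>.mp h2
          simpa using this
        rw [hgz]
        simp [hAdef, ← hS0]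
      · have hs : 0 < Real.sqrt (2 * S (t + 1)) := Real.sqrt_pos.mpr (by linarith)
        set s := Real.sqrt (2 * S (t + 1)) with hsdef
        have hs2 : s ^ 2 = 2 * S (t + 1) := Real.sq_sqrt (by linarith)
        set γ := R / s with hγdef
        have hγpos : 0 < γ := div_pos hRpos hs
        have hb1 : b (t + 1) ≤ ‖(u t - γ • gradh t (u t)) - ustar‖ ^ 2 := by
          have hSb : S (t + 1) = ∑ i ∈ range (t + 1), ‖gradh i (u i)‖ ^ 2 := by
            rw [hSdef]
          have hupd : u (t + 1) = proj (u t - γ • gradh t (u t)) := by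
            rw [hupdate t, hγdef, hsdef, hSb]
          have := proj_sq' hDconv (hproj (u t - γ • gradh t (u t))).1
            (fun w hw => (hproj _).2 w hw) hstar
          rw [← hupd] at this
          exact this
        have hexp : ‖(u t - γ • gradh t (u t)) - ustar‖ ^ 2 =
            b t - 2 * γ * ⟪gradh t (u t), u t - ustar⟫ + γ ^ 2 * ‖gradh t (u t)‖ ^ 2 := by
          have hre : (u t - γ • gradh t (u t)) - ustar
              = (u t - ustar) - γ • gradh t (u t) := by abel
          rw [hre, norm_sub_sq_real, real_inner_smul_right, norm_smul,
            real_inner_comm, Real.norm_eq_abs, abs_of_pos hγpos, hbdef]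
          ring
        have h2 : ⟪gradh t (u t), u t - ustar⟫ ≤
            (b t - b (t + 1) + γ ^ 2 * ‖gradh t (u t)‖ ^ 2) / (2 * γ) := by
          rw [le_div_iff₀ (by linarith : (0:ℝ) < 2 * γ)]
          nlinarith [hb1, hexp]
        have h3 : (b t - b (t + 1) + γ ^ 2 * ‖gradh t (u t)‖ ^ 2) / (2 * γ) =
            A (t + 1) * (b t - b (t + 1)) +
              (R / 2) * (‖gradh t (u t)‖ ^ 2 / s) := by
          simp only [hAdef, hγdef, ← hsdef]
          field_simp
        linarith [h2, h3.le, h3.ge]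
    have hsum1 : ∀ n, (∑ t ∈ range n, A (t + 1) * (b t - b (t + 1))) + A n * b n ≤
        A n * R ^ 2 := by
      intro n; induction n with
      | zero => simp [hA0]
      | succ n ih =>
        rw [Finset.sum_range_succ]
        nlinarith [ih, mul_nonneg (sub_nonneg.2 (hAmono n)) (sub_nonneg.2 (hbR n)),
          hbnn (n + 1), hAnn (n + 1)]
    have hsum2 : ∀ n, (∑ t ∈ range n, ‖gradh t (u t)‖ ^ 2 / Real.sqrt (2 * S (t + 1)))
        ≤ Real.sqrt (2 * S n) := by
      intro n; induction n with
      | zero => simpa using Real.sqrt_nonneg (2 * S 0)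
      | succ n ih =>
        rw [Finset.sum_range_succ]
        have hstep2 := sqrt_step' (sq_nonneg ‖gradh n (u n)‖) (hSnn n)
        rw [← hSsucc n] at hstep2
        linarith
    calc ∑ t ∈ range T, (h t (u t) - h t ustar)
        ≤ ∑ t ∈ range T, ⟪gradh t (u t), u t - ustar⟫ :=
          Finset.sum_le_sum fun t _ => hgi t
      _ ≤ ∑ t ∈ range T, (A (t + 1) * (b t - b (t + 1)) +
            (R / 2) * (‖gradh t (u t)‖ ^ 2 / Real.sqrt (2 * S (t + 1)))) :=
          Finset.sum_le_sum fun t _ => hstep t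
      _ = (∑ t ∈ range T, A (t + 1) * (b t - b (t + 1))) +
            (R / 2) * ∑ t ∈ range T, ‖gradh t (u t)‖ ^ 2 / Real.sqrt (2 * S (t + 1)) := by
          rw [Finset.sum_add_distrib, Finset.mul_sum]
      _ ≤ A T * R ^ 2 + (R / 2) * Real.sqrt (2 * S T) := by
          have h1 := hsum1 T
          have h2 := hsum2 T
          have h3 : 0 ≤ A T * b T := mul_nonneg (hAnn T) (hbnn T)
          have hR2 : (0:ℝ) ≤ R / 2 := by linarith
          nlinarith [mul_le_mul_of_nonneg_left h2 hR2]
      _ = R * Real.sqrt (2 * S T) := by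
          simp only [hAdef]
          field_simp
          ring
end

section
/- Let h_t(λ) = ‖g_t + λ d_t‖² for λ ∈ [0,1], where ‖g_t‖ ≤ G and ‖d_t‖ ≤ 2G for all t. Then the derivative satisfies |h_t'(λ)|² ≤ 16 G² h_t(λ) for all λ, and consequently any algorithm with second-order regret bound R_T ≤ √(2 Σ_t |h_t'(λ_t)|²) on [0,1] satisfies R_T ≤ 128 G² + 8G √(2 Σ_{t=1}^T h_t(λ*)) for any λ* ∈ [0,1]. -/
open Finset

/-- For `h_t(λ) = ‖g_t + λd_t‖²` with `‖g_t‖ ≤ G` and `‖d_t‖ ≤ 2G`, the derivative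
`h_t'(λ) = 2⟨d_t, g_t + λd_t⟩` satisfies `|h_t'(λ)|² ≤ 16G² h_t(λ)`, and consequently any
algorithm with second-order regret bound `R_T ≤ √(2 Σ_t |h_t'(λ_t)|²)` on `[0,1]` satisfies
`R_T ≤ 128G² + 8G√(2 Σ_t h_t(λ*))` for any `λ* ∈ [0,1]`. -/
theorem stmt9 {d : ℕ} (G : ℝ) (hG : 0 < G) (T : ℕ)
    (g dv : ℕ → EuclideanSpace ℝ (Fin d))
    (hg : ∀ t, ‖g t‖ ≤ G) (hd : ∀ t, ‖dv t‖ ≤ 2 * G)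
    (lam : ℕ → ℝ) (hlam : ∀ t, lam t ∈ Set.Icc (0 : ℝ) 1)
    (lamstar : ℝ) (hstar : lamstar ∈ Set.Icc (0 : ℝ) 1) :
    (∀ (t : ℕ) (l : ℝ),
      (2 * (inner ℝ (dv t) (g t + l • dv t) : ℝ)) ^ 2 ≤ 16 * G ^ 2 * ‖g t + l • dv t‖ ^ 2) ∧
    ((∑ t ∈ range T, ‖g t + lam t • dv t‖ ^ 2) - (∑ t ∈ range T, ‖g t + lamstar • dv t‖ ^ 2) ≤
        Real.sqrt (2 * ∑ t ∈ range T, (2 * (inner ℝ (dv t) (g t + lam t • dv t) : ℝ)) ^ 2) →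
      (∑ t ∈ range T, ‖g t + lam t • dv t‖ ^ 2) - (∑ t ∈ range T, ‖g t + lamstar • dv t‖ ^ 2) ≤
        128 * G ^ 2 + 8 * G * Real.sqrt (2 * ∑ t ∈ range T, ‖g t + lamstar • dv t‖ ^ 2)) := by
  have key : ∀ (t : ℕ) (l : ℝ),
      (2 * (inner ℝ (dv t) (g t + l • dv t) : ℝ)) ^ 2 ≤ 16 * G ^ 2 * ‖g t + l • dv t‖ ^ 2 := by
    intro t l
    have h1 := abs_real_inner_le_norm (dv t) (g t + l • dv t)
    have h2 := hd t
    have h3 : (0:ℝ) ≤ ‖g t + l • dv t‖ := norm_nonneg _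
    have h4 : (0:ℝ) ≤ ‖dv t‖ := norm_nonneg _
    have h5 : |(inner ℝ (dv t) (g t + l • dv t) : ℝ)| ^ 2
        = (inner ℝ (dv t) (g t + l • dv t) : ℝ) ^ 2 := sq_abs _
    have h6 := mul_self_le_mul_self (abs_nonneg (inner ℝ (dv t) (g t + l • dv t) : ℝ)) h1
    have h7 : ‖dv t‖ * ‖g t + l • dv t‖ ≤ 2 * G * ‖g t + l • dv t‖ :=
      mul_le_mul_of_nonneg_right h2 h3
    have h8 := mul_self_le_mul_self (mul_nonneg h4 h3) h7
    nlinarith [abs_nonneg (inner ℝ (dv t) (g t + l • dv t) : ℝ), hG.le, sq_abs (inner ℝ (dv t) (g t + l • dv t) : ℝ)]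
  refine ⟨key, ?_⟩
  intro hyp
  set A := ∑ t ∈ range T, ‖g t + lam t • dv t‖ ^ 2 with hA
  set B := ∑ t ∈ range T, ‖g t + lamstar • dv t‖ ^ 2 with hB
  have hBnn : 0 ≤ B := Finset.sum_nonneg fun t _ => sq_nonneg _
  have hAnn : 0 ≤ A := Finset.sum_nonneg fun t _ => sq_nonneg _
  set s := Real.sqrt (2 * B) with hsdef
  have hs : 0 ≤ s := Real.sqrt_nonneg _
  have hs2 : s ^ 2 = 2 * B := Real.sq_sqrt (by linarith)
  have hsum : ∑ t ∈ range T, (2 * (inner ℝ (dv t) (g t + lam t • dv t) : ℝ)) ^ 2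
      ≤ 16 * G ^ 2 * A := by
    rw [hA, Finset.mul_sum]
    exact Finset.sum_le_sum fun t _ => key t (lam t)
  by_cases hR : A - B ≤ 0
  · have hpos : 0 ≤ 128 * G ^ 2 + 8 * G * s := by positivity
    linarith
  push_neg at hR
  have h6 : A - B ≤ Real.sqrt (32 * G ^ 2 * A) :=
    le_trans hyp (Real.sqrt_le_sqrt (by linarith))
  have h7 : (A - B) * (A - B) ≤ 32 * G ^ 2 * A := by
    have hx := mul_self_le_mul_self hR.le h6
    rwa [Real.mul_self_sqrt (by positivity)] at hx
  nlinarith [sq_nonneg (A - B - 32 * G ^ 2 - 4 * G * s), mul_pos hG hG,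
    mul_nonneg (mul_nonneg hG.le hG.le) hs, mul_nonneg hG.le hs,
    mul_nonneg (mul_nonneg hG.le hs) hs, sq_nonneg (4 * G - s)]
end

section
/- Let L : ℝ^d → ℝ be β-smooth and M-bounded (|L(w)| ≤ M for all w). The AdaGrad-Norm iterates w_{t+1} = w_t − η_t g_t with η_t = η_0 (Σ_{s=1}^t ‖g_s‖²)^{−1/2} satisfy Σ_{t=1}^T ‖∇L(w_t)‖² ≤ (2M/η_0 + η_0 β) √(Σ_{t=1}^T ‖g_t‖²) + Σ_{t=1}^T ⟨∇L(w_t) − g_t, ∇L(w_t)⟩. -/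
open Finset

/-- For a `β`-smooth and `M`-bounded objective `L`, the AdaGrad-Norm iterates
`w_{t+1} = w_t − η_t g_t` with `η_t = η₀(Σ_{s≤t}‖g_s‖²)^{−1/2}` satisfy
`Σ_t ‖∇L(w_t)‖² ≤ (2M/η₀ + η₀β)√(Σ_t ‖g_t‖²) + Σ_t ⟨∇L(w_t) − g_t, ∇L(w_t)⟩`. -/
theorem stmt11 {E : Type*} [NormedAddCommGroup E] [InnerProductSpace ℝ E] [CompleteSpace E]
    (L : E → ℝ) (gradL : E → E) (β M η0 : ℝ)
    (hβ : 0 < β) (hM : 0 < M) (hη : 0 < η0)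
    (hgrad : ∀ x, HasGradientAt L (gradL x) x)
    (hsmooth : ∀ u w, L u ≤ L w + (inner ℝ (gradL w) (u - w) : ℝ) + β / 2 * ‖u - w‖ ^ 2)
    (hbound : ∀ w, |L w| ≤ M)
    (T : ℕ) (g : ℕ → E) (w : ℕ → E)
    (hupdate : ∀ t, w (t + 1) =
      w t - (η0 / Real.sqrt (∑ s ∈ range (t + 1), ‖g s‖ ^ 2)) • g t) :
    ∑ t ∈ range T, ‖gradL (w t)‖ ^ 2 ≤
      (2 * M / η0 + η0 * β) * Real.sqrt (∑ t ∈ range T, ‖g t‖ ^ 2) +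
        ∑ t ∈ range T, (inner ℝ (gradL (w t) - g t) (gradL (w t)) : ℝ) := by
  set b : ℕ → ℝ := fun t => Real.sqrt (∑ s ∈ range t, ‖g s‖ ^ 2) with hb
  have hbnonneg : ∀ t, 0 ≤ b t := fun t => Real.sqrt_nonneg _
  have hbmono : ∀ t, b t ≤ b (t + 1) := by
    intro t
    apply Real.sqrt_le_sqrt
    rw [sum_range_succ]
    nlinarith [sq_nonneg (‖g t‖)]
  -- Abel summation bound
  have habel : ∀ N, ∑ t ∈ range N, (L (w t) - L (w (t + 1))) * b (t + 1)
      ≤ (M - L (w N)) * b N := by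
    intro N
    induction N with
    | zero => simp [hb]
    | succ N ih =>
      rw [sum_range_succ]
      have h1 : (M - L (w N)) * b N ≤ (M - L (w N)) * b (N + 1) := by
        have := hbound (w N)
        have hMf : 0 ≤ M - L (w N) := by cases abs_le.mp this; linarith
        exact mul_le_mul_of_nonneg_left (hbmono N) hMf
      nlinarith [ih, h1]
  -- second-order-term bound
  have hsum2 : ∀ N, ∑ t ∈ range N, ‖g t‖ ^ 2 / b (t + 1) ≤ 2 * b N := by
    intro N
    induction N with
    | zero => simp [hb]
    | succ N ih =>
      rw [sum_range_succ]
      have hstep : ‖g N‖ ^ 2 / b (N + 1) ≤ 2 * (b (N + 1) - b N) := by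
        have hA : (0:ℝ) ≤ ∑ s ∈ range N, ‖g s‖ ^ 2 :=
          sum_nonneg fun i _ => sq_nonneg _
        have hAN : (∑ s ∈ range (N+1), ‖g s‖ ^ 2) = (∑ s ∈ range N, ‖g s‖ ^ 2) + ‖g N‖^2 :=
          sum_range_succ _ _
        rcases eq_or_lt_of_le (hbnonneg (N+1)) with h0 | hpos
        · -- b (N+1) = 0
          have hz : b (N + 1) = 0 := h0.symm
          have hsum0 : (∑ s ∈ range (N+1), ‖g s‖ ^ 2) = 0 := by
            have h : (∑ s ∈ range (N+1), ‖g s‖ ^ 2) ≤ 0 := Real.sqrt_eq_zero'.mp hz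
            exact le_antisymm h (by positivity)
          have hgN : ‖g N‖ ^ 2 = 0 := by nlinarith [hAN, hA, sq_nonneg ‖g N‖]
          have hbN0 : b N = 0 := le_antisymm (hz ▸ hbmono N) (hbnonneg N)
          simp [hgN, hz, hbN0]
        · -- b (N+1) > 0
          rw [div_le_iff₀ hpos]
          have hsq : b (N+1) ^ 2 = ∑ s ∈ range (N+1), ‖g s‖ ^ 2 := by
            exact Real.sq_sqrt (by positivity)
          have hsqN : b N ^ 2 = ∑ s ∈ range N, ‖g s‖ ^ 2 := by
            exact Real.sq_sqrt hA
          nlinarith [hbnonneg N, hbmono N, sq_nonneg (b (N+1) - b N)]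
      linarith
  -- per-step inequality
  have hstep : ∀ t, ‖gradL (w t)‖ ^ 2 ≤
      (L (w t) - L (w (t + 1))) * b (t + 1) / η0
      + (inner ℝ (gradL (w t) - g t) (gradL (w t)) : ℝ)
      + (η0 * β / 2) * (‖g t‖ ^ 2 / b (t + 1)) := by
    intro t
    have hinner : (inner ℝ (gradL (w t) - g t) (gradL (w t)) : ℝ)
        = ‖gradL (w t)‖ ^ 2 - (inner ℝ (gradL (w t)) (g t) : ℝ) := by
      rw [inner_sub_left, real_inner_self_eq_norm_sq, real_inner_comm]
    rcases eq_or_lt_of_le (hbnonneg (t+1)) with h0 | hpos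
    · have hz : b (t + 1) = 0 := h0.symm
      have hsum0 : (∑ s ∈ range (t+1), ‖g s‖ ^ 2) = 0 := by
        have h : (∑ s ∈ range (t+1), ‖g s‖ ^ 2) ≤ 0 := Real.sqrt_eq_zero'.mp hz
        exact le_antisymm h (by positivity)
      have hgt : g t = 0 := by
        have := (sum_eq_zero_iff_of_nonneg (fun i _ => sq_nonneg ‖g i‖)).mp hsum0 t
          (self_mem_range_succ t)
        have : ‖g t‖ = 0 := by nlinarith [this]
        simpa using this
      have hww : w (t + 1) = w t := by
        rw [hupdate t, hgt]; simp
      rw [hww, hgt]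
      simp [real_inner_self_eq_norm_sq, hz]
    · -- b (t+1) > 0
      have hu := hsmooth (w (t + 1)) (w t)
      have hdiff : w (t + 1) - w t = -((η0 / b (t + 1)) • g t) := by
        rw [hupdate t]; abel_nf; rfl
      rw [hdiff] at hu
      have hη' : 0 < η0 / b (t + 1) := div_pos hη hpos
      rw [inner_neg_right, inner_smul_right, norm_neg, norm_smul, Real.norm_eq_abs,
        abs_of_pos hη', mul_pow] at hu
      -- hu : L (w (t+1)) ≤ L (w t) + -(η0/b(t+1) * inner (gradL (w t)) (g t)) + β/2 * ((η0/b(t+1))^2 * ‖g t‖^2)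
      have key : (inner ℝ (gradL (w t)) (g t) : ℝ) ≤
          (L (w t) - L (w (t + 1))) * b (t + 1) / η0
          + (η0 * β / 2) * (‖g t‖ ^ 2 / b (t + 1)) := by
        have h1 : η0 / b (t + 1) * (inner ℝ (gradL (w t)) (g t) : ℝ)
            ≤ (L (w t) - L (w (t + 1))) + β / 2 * ((η0 / b (t + 1)) ^ 2 * ‖g t‖ ^ 2) := by
          linarith
        have h2 := mul_le_mul_of_nonneg_left h1 (le_of_lt (div_pos hpos hη))
        have hbne : b (t + 1) ≠ 0 := ne_of_gt hpos
        have hηne : η0 ≠ 0 := ne_of_gt hη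
        have e1 : b (t+1) / η0 * (η0 / b (t+1) * (inner ℝ (gradL (w t)) (g t) : ℝ))
            = (inner ℝ (gradL (w t)) (g t) : ℝ) := by field_simp
        have e2 : b (t+1) / η0 * ((L (w t) - L (w (t + 1)))
              + β / 2 * ((η0 / b (t+1)) ^ 2 * ‖g t‖ ^ 2))
            = (L (w t) - L (w (t + 1))) * b (t + 1) / η0
              + (η0 * β / 2) * (‖g t‖ ^ 2 / b (t + 1)) := by field_simp
        rw [e1, e2] at h2
        exact h2
      linarith [hinner, key]
  calc ∑ t ∈ range T, ‖gradL (w t)‖ ^ 2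
      ≤ ∑ t ∈ range T, ((L (w t) - L (w (t + 1))) * b (t + 1) / η0
        + (inner ℝ (gradL (w t) - g t) (gradL (w t)) : ℝ)
        + (η0 * β / 2) * (‖g t‖ ^ 2 / b (t + 1))) :=
        sum_le_sum fun t _ => hstep t
    _ = (∑ t ∈ range T, (L (w t) - L (w (t + 1))) * b (t + 1)) / η0
        + (∑ t ∈ range T, (inner ℝ (gradL (w t) - g t) (gradL (w t)) : ℝ))
        + (η0 * β / 2) * ∑ t ∈ range T, ‖g t‖ ^ 2 / b (t + 1) := by
        rw [sum_add_distrib, sum_add_distrib, sum_div, mul_sum]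
    _ ≤ (M - L (w T)) * b T / η0
        + (∑ t ∈ range T, (inner ℝ (gradL (w t) - g t) (gradL (w t)) : ℝ))
        + (η0 * β / 2) * (2 * b T) := by
        have hpos2 : (0:ℝ) ≤ η0 * β / 2 := by positivity
        have h1 : (∑ t ∈ range T, (L (w t) - L (w (t + 1))) * b (t + 1)) / η0
            ≤ (M - L (w T)) * b T / η0 := by
          exact div_le_div_of_nonneg_right (habel T) hη.le
        have h2 := mul_le_mul_of_nonneg_left (hsum2 T) hpos2
        linarith
    _ ≤ (2 * M / η0 + η0 * β) * b T
        + ∑ t ∈ range T, (inner ℝ (gradL (w t) - g t) (gradL (w t)) : ℝ) := by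
        have hbT := hbnonneg T
        have hLT := abs_le.mp (hbound (w T))
        have h1 : (M - L (w T)) * b T / η0 ≤ 2 * M / η0 * b T := by
          rw [div_mul_eq_mul_div]
          exact div_le_div_of_nonneg_right (by nlinarith) hη.le
        nlinarith [h1]
    _ = (2 * M / η0 + η0 * β) * Real.sqrt (∑ t ∈ range T, ‖g t‖ ^ 2)
        + ∑ t ∈ range T, (inner ℝ (gradL (w t) - g t) (gradL (w t)) : ℝ) := by rw [hb]
end

section
/- In the linear regression setting with feature–residual independence, the PPI++ optimal interpolation parameter simplifies to λ*_{PPI++} = (1/(1+r)) · Cov(ε, ε_f)/Var(ε_f). -/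
open MeasureTheory ProbabilityTheory

lemma posdef_trace_pos {d : ℕ} (hd : 0 < d) {M : Matrix (Fin d) (Fin d) ℝ}
    (hM : M.PosDef) : 0 < M.trace := by
  have hdiag : ∀ i, 0 < M i i := by
    intro i
    have h := hM.dotProduct_mulVec_pos (x := Pi.single i 1) (by
      intro h
      have := congrFun h i
      simp at this)
    simpa [dotProduct, Matrix.mulVec_single, Pi.single_apply, Finset.sum_ite_eq'] using h
  have : Nonempty (Fin d) := ⟨⟨0, hd⟩⟩
  exact Finset.sum_pos (fun i _ => hdiag i) Finset.univ_nonempty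

/-- Covariance of two real random variables. -/
noncomputable def covR {Ω : Type*} [MeasurableSpace Ω] (μ : Measure Ω) (u v : Ω → ℝ) : ℝ :=
  ∫ ω, (u ω - ∫ ω', u ω' ∂μ) * (v ω - ∫ ω', v ω' ∂μ) ∂μ

/-- In linear regression with squared loss and feature–residual independence, the PPI++
optimal interpolation parameter
`λ*_{PP} = Tr(H⁻¹(Cov(∇ℓ,∇ℓ^f) + Cov(∇ℓ^f,∇ℓ))H⁻¹) / (2(1+r)Tr(H⁻¹ Cov(∇ℓ^f) H⁻¹))`
(with `H = Σ_x`) simplifies to `(1/(1+r)) · Cov(ε, ε_f)/Var(ε_f)`. -/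
theorem stmt15 {Ω : Type*} [MeasurableSpace Ω] (μ : Measure Ω) [IsProbabilityMeasure μ]
    {d : ℕ} (hd : 0 < d) (x : Ω → Fin d → ℝ) (ε εf : Ω → ℝ) (r : ℝ) (hr : 0 < r)
    (hmx : Measurable x) (hmε : Measurable ε) (hmεf : Measurable εf)
    (hindep : IndepFun x (fun ω => (ε ω, εf ω)) μ)
    (hε0 : ∫ ω, ε ω ∂μ = 0) (hεf0 : ∫ ω, εf ω ∂μ = 0)
    (hεεf : Integrable (fun ω => ε ω * εf ω) μ)
    (hεf2 : Integrable (fun ω => εf ω * εf ω) μ)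
    (hε1 : Integrable ε μ) (hεf1 : Integrable εf μ) (hx1 : ∀ i, Integrable (fun ω => x ω i) μ)
    (hx2 : ∀ i j, Integrable (fun ω => x ω i * x ω j) μ)
    (hprod1 : ∀ i j, Integrable (fun ω => x ω i * x ω j * (ε ω * εf ω)) μ)
    (hprod2 : ∀ i j, Integrable (fun ω => x ω i * x ω j * (εf ω * εf ω)) μ)
    (Sx : Matrix (Fin d) (Fin d) ℝ)
    (hSx : ∀ i j, Sx i j = ∫ ω, x ω i * x ω j ∂μ)
    (hpd : Sx.PosDef)
    (Clf Cfl Cf : Matrix (Fin d) (Fin d) ℝ)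
    (hClf : ∀ i j, Clf i j = covR μ (fun ω => -(x ω i * ε ω)) (fun ω => -(x ω j * εf ω)))
    (hCfl : ∀ i j, Cfl i j = covR μ (fun ω => -(x ω i * εf ω)) (fun ω => -(x ω j * ε ω)))
    (hCf : ∀ i j, Cf i j = covR μ (fun ω => -(x ω i * εf ω)) (fun ω => -(x ω j * εf ω)))
    (hv : 0 < covR μ εf εf) :
    (Sx⁻¹ * (Clf + Cfl) * Sx⁻¹).trace / (2 * (1 + r) * (Sx⁻¹ * Cf * Sx⁻¹).trace) =
      (1 / (1 + r)) * (covR μ ε εf / covR μ εf εf) := by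
  set c : ℝ := ∫ ω, ε ω * εf ω ∂μ with hc
  set v : ℝ := ∫ ω, εf ω * εf ω ∂μ with hvv
  -- independence of coordinate products
  have hindep2 : ∀ i j (g : ℝ × ℝ → ℝ) (hg : Measurable g),
      IndepFun (fun ω => x ω i * x ω j) (fun ω => g (ε ω, εf ω)) μ :=
    fun i j g hg => hindep.comp (((measurable_pi_apply i).mul (measurable_pi_apply j))) hg
  have hindep1 : ∀ i (g : ℝ × ℝ → ℝ) (hg : Measurable g),
      IndepFun (fun ω => x ω i) (fun ω => g (ε ω, εf ω)) μ :=
    fun i g hg => hindep.comp (measurable_pi_apply i) hg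
  -- E[xᵢ ε] = 0 and E[xᵢ εf] = 0
  have hmean1 : ∀ i, (∫ ω, x ω i * ε ω ∂μ) = 0 := by
    intro i
    have h := (hindep1 i (fun p => p.1) measurable_fst).integral_mul_eq_mul_integral
      (hx1 i).aestronglyMeasurable hε1.aestronglyMeasurable
    simpa [Pi.mul_apply, hε0] using h
  have hmean2 : ∀ i, (∫ ω, x ω i * εf ω ∂μ) = 0 := by
    intro i
    have h := (hindep1 i (fun p => p.2) measurable_snd).integral_mul_eq_mul_integral
      (hx1 i).aestronglyMeasurable hεf1.aestronglyMeasurable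
    simpa [Pi.mul_apply, hεf0] using h
  -- E[xᵢxⱼ · ε εf] = Sx i j * c and similarly for εf εf
  have hkey1 : ∀ i j, (∫ ω, x ω i * x ω j * (ε ω * εf ω) ∂μ) = Sx i j * c := by
    intro i j
    have h := (hindep2 i j (fun p => p.1 * p.2)
      (measurable_fst.mul measurable_snd)).integral_mul_eq_mul_integral (hx2 i j).aestronglyMeasurable hεεf.aestronglyMeasurable
    simpa [Pi.mul_apply, hSx i j] using h
  have hkey2 : ∀ i j, (∫ ω, x ω i * x ω j * (εf ω * εf ω) ∂μ) = Sx i j * v := by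
    intro i j
    have h := (hindep2 i j (fun p => p.2 * p.2)
      (measurable_snd.mul measurable_snd)).integral_mul_eq_mul_integral (hx2 i j).aestronglyMeasurable hεf2.aestronglyMeasurable
    simpa [Pi.mul_apply, hSx i j] using h
  -- covariance simplifications
  have hcov_εεf : covR μ ε εf = c := by
    simp only [covR, hε0, hεf0, sub_zero, hc]
  have hcov_εfεf : covR μ εf εf = v := by
    simp only [covR, hεf0, sub_zero, hvv]
  have hClf' : Clf = c • Sx := by
    ext i j
    rw [hClf i j]
    simp only [covR, integral_neg, hmean1, hmean2, neg_zero, sub_zero]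
    have : ∀ ω, -(x ω i * ε ω) * -(x ω j * εf ω) = x ω i * x ω j * (ε ω * εf ω) := by
      intro ω; ring
    rw [integral_congr_ae (Filter.Eventually.of_forall this), hkey1 i j]
    simp [mul_comm]
  have hCfl' : Cfl = c • Sx := by
    ext i j
    rw [hCfl i j]
    simp only [covR, integral_neg, hmean1, hmean2, neg_zero, sub_zero]
    have : ∀ ω, -(x ω i * εf ω) * -(x ω j * ε ω) = x ω j * x ω i * (ε ω * εf ω) := by
      intro ω; ring
    rw [integral_congr_ae (Filter.Eventually.of_forall this), hkey1 j i]
    have hsym : Sx j i = Sx i j := by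
      rw [hSx j i, hSx i j]
      exact integral_congr_ae (Filter.Eventually.of_forall fun ω => mul_comm _ _)
    rw [hsym]; simp [mul_comm]
  have hCf' : Cf = v • Sx := by
    ext i j
    rw [hCf i j]
    simp only [covR, integral_neg, hmean2, neg_zero, sub_zero]
    have : ∀ ω, -(x ω i * εf ω) * -(x ω j * εf ω) = x ω i * x ω j * (εf ω * εf ω) := by
      intro ω; ring
    rw [integral_congr_ae (Filter.Eventually.of_forall this), hkey2 i j]
    simp [mul_comm]
  -- matrix algebra
  have hdet : IsUnit Sx.det := isUnit_iff_ne_zero.mpr (ne_of_gt hpd.det_pos)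
  have hinv : Sx⁻¹ * Sx = 1 := Matrix.nonsing_inv_mul Sx hdet
  have htr1 : (Sx⁻¹ * (Clf + Cfl) * Sx⁻¹).trace = (2 * c) * Sx⁻¹.trace := by
    rw [hClf', hCfl']
    have : Sx⁻¹ * (c • Sx + c • Sx) * Sx⁻¹ = (2 * c) • Sx⁻¹ := by
      rw [← add_smul, Matrix.mul_smul, Matrix.smul_mul, hinv, Matrix.one_mul]
      ring_nf
    rw [this, Matrix.trace_smul]
    simp [mul_comm]
  have htr2 : (Sx⁻¹ * Cf * Sx⁻¹).trace = v * Sx⁻¹.trace := by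
    rw [hCf']
    have : Sx⁻¹ * (v • Sx) * Sx⁻¹ = v • Sx⁻¹ := by
      rw [Matrix.mul_smul, Matrix.smul_mul, hinv, Matrix.one_mul]
    rw [this, Matrix.trace_smul]
    simp
  have htrpos : 0 < Sx⁻¹.trace := posdef_trace_pos hd hpd.inv
  have hvpos : 0 < v := by rw [← hcov_εfεf]; exact hv
  rw [htr1, htr2, hcov_εεf, hcov_εfεf]
  have h1r : (1 : ℝ) + r ≠ 0 := by positivity
  set t := Sx⁻¹.trace with ht
  rw [div_eq_iff (by positivity)]
  field_simp
end
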